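/- Let κ be a regular uncountable cardinal. If principle E(κ) holds, then principle C*(κ) holds. -/

import Mathlib

open Cardinal

/-- `C` is closed and unbounded (club) in the ordinal `o`. -/
def ClubIn (o : Ordinal) (C : Set Ordinal) : Prop :=
  C ⊆ Set.Iio o ∧ (∀ α < o, ∃ β ∈ C, α < β) ∧
    ∀ α < o, 0 < α → (∀ β < α, ∃ γ ∈ C, β < γ ∧ γ < α) → α ∈ C

/-- `S` is a stationary subset of the ordinal `o`: it meets every club subset of `o`. -/
def StationaryIn (o : Ordinal) (S : Set Ordinal) : Prop :=
  S ⊆ Set.Iio o ∧ ∀ C, ClubIn o C → (S ∩ C).Nonempty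

/-- `S` is a cofinal (unbounded) subset of the ordinal `o`. -/
def CofinalIn (o : Ordinal) (S : Set Ordinal) : Prop :=
  S ⊆ Set.Iio o ∧ ∀ α < o, ∃ β ∈ S, α < β

/-- For a matrix `A` of subsets of `ℕ`, a finite sequence `t ∈ ω^{<ω}` and
`s : {0,…,|t|-1} → Ordinal`, this is `A[s,t] = ⋂_{i<|t|} A(s i, t i)`. -/
def MatInt (A : Ordinal → ℕ → Set ℕ) (t : List ℕ) (s : Fin t.length → Ordinal) : Set ℕ :=
  ⋂ i, A (s i) (t.get i)

/-- Principle E(κ). -/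
def PrincipleE (κ : Cardinal) : Prop :=
  ∀ (T : Set (List ℕ)) (A : Ordinal → ℕ → Set ℕ),
    (∃ S : Set Ordinal, StationaryIn κ.ord S ∧
      {X : Set ℕ | ∃ t ∈ T, ∃ s : Fin (List.length t) → Ordinal,
        Function.Injective s ∧ (∀ i, s i ∈ S) ∧ X = MatInt A t s}.Countable) ∨
    (∃ t ∈ T, ∃ D : Fin t.length → Set Ordinal,
      (∀ i, StationaryIn κ.ord (D i)) ∧
      ∀ s₀ s₁ : Fin t.length → Ordinal, Function.Injective s₀ → Function.Injective s₁ →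
        (∀ i, s₀ i ∈ D i) → (∀ i, s₁ i ∈ D i) → (∀ i, s₀ i ≠ s₁ i) →
          MatInt A t s₀ ≠ MatInt A t s₁)

/-- Principle C*(κ). -/
def PrincipleCstar (κ : Cardinal) : Prop :=
  ∀ (T : Set (List ℕ)) (A : Ordinal → ℕ → Set ℕ),
    (∃ S : Set Ordinal, StationaryIn κ.ord S ∧
      ∀ t ∈ T, ∀ s : Fin t.length → Ordinal, Function.Injective s →
        (∀ i, s i ∈ S) → (MatInt A t s).Finite) ∨
    (∃ t ∈ T, ∃ D : Fin t.length → Set Ordinal,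
      (∀ i, StationaryIn κ.ord (D i)) ∧
      ∀ s : Fin t.length → Ordinal, Function.Injective s →
        (∀ i, s i ∈ D i) → (MatInt A t s).Infinite)

lemma clubIn_Iio {o : Ordinal} (hlim : Order.IsSuccLimit o) : ClubIn o (Set.Iio o) := by
  refine ⟨le_refl _, fun α hα => ⟨Order.succ α, hlim.succ_lt hα, Order.lt_succ α⟩,
    fun α hα _ _ => hα⟩

lemma clubIn_iInter {o : Ordinal} (hlim : Order.IsSuccLimit o) (hcof : ℵ₀ < o.cof)
    (C : ℕ → Set Ordinal) (h : ∀ n, ClubIn o (C n)) : ClubIn o (⋂ n, C n) := by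
  have hsub : (⋂ n, C n) ⊆ Set.Iio o := (Set.iInter_subset C 0).trans (h 0).1
  refine ⟨hsub, ?_, ?_⟩
  · intro α hα
    -- a total step function
    set f : ℕ → Ordinal → Ordinal := fun n b =>
      if hb : b < o then ((h n).2.1 b hb).choose else 0 with hf
    have hfspec : ∀ n b, b < o → f n b ∈ C n ∧ b < f n b := by
      intro n b hb
      have := ((h n).2.1 b hb).choose_spec
      simp only [hf, dif_pos hb]
      exact ⟨this.1, this.2⟩
    set β : ℕ → Ordinal := fun m => Nat.rec (Order.succ α) (fun m ih => f m.unpair.1 ih) m with hβ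
    have hβ0 : β 0 = Order.succ α := rfl
    have hβs : ∀ m, β (m + 1) = f m.unpair.1 (β m) := fun m => rfl
    have hinv : ∀ m, β m < o ∧ β m < β (m + 1) ∧ β (m+1) ∈ C m.unpair.1 := by
      intro m
      induction m with
      | zero =>
        have h0 : β 0 < o := by rw [hβ0]; exact hlim.succ_lt hα
        obtain ⟨hm, hlt⟩ := hfspec (Nat.unpair 0).1 _ h0
        exact ⟨h0, by rw [hβs 0]; exact hlt, by rw [hβs 0]; exact hm⟩
      | succ m ih =>
        have h0 : β (m+1) < o := (h m.unpair.1).1 ih.2.2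
        obtain ⟨hm, hlt⟩ := hfspec (Nat.unpair (m+1)).1 _ h0
        exact ⟨h0, by rw [hβs (m+1)]; exact hlt, by rw [hβs (m+1)]; exact hm⟩
    have hmono : StrictMono β := strictMono_nat_of_lt_succ (fun m => (hinv m).2.1)
    set σ : Ordinal := ⨆ m, β m with hσ
    have hσo : σ < o := by
      apply Ordinal.iSup_lt_ord_lift _ (fun m => (hinv m).1)
      simpa using hcof
    have hle : ∀ m, β m ≤ σ := Ordinal.le_iSup β
    have hβσ : ∀ m, β m < σ := fun m => lt_of_lt_of_le (hinv m).2.1 (hle (m+1))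
    have hασ : α < σ := lt_of_lt_of_le (Order.lt_succ α) (le_trans (le_of_eq hβ0.symm) (hle 0))
    have hσC : ∀ n, σ ∈ C n := by
      intro n
      apply (h n).2.2 σ hσo (lt_of_le_of_lt (zero_le (a := α)) hασ)
      intro b hb
      obtain ⟨m, hm⟩ := Ordinal.lt_iSup_iff.mp hb
      refine ⟨β (Nat.pair n m + 1), ?_, ?_, hβσ (Nat.pair n m + 1)⟩
      · have := (hinv (Nat.pair n m)).2.2
        rwa [Nat.unpair_pair] at this
      · exact lt_of_lt_of_le hm (le_trans (hmono.monotone (Nat.right_le_pair n m))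
          (le_of_lt (hinv (Nat.pair n m)).2.1))
    exact ⟨σ, Set.mem_iInter.mpr hσC, hασ⟩
  · intro α hα h0 hlimpt
    refine Set.mem_iInter.mpr fun n => (h n).2.2 α hα h0 ?_
    intro b hb
    obtain ⟨γ, hγ, h1, h2⟩ := hlimpt b hb
    exact ⟨γ, Set.mem_iInter.mp hγ n, h1, h2⟩

lemma clubIn_inter {o : Ordinal} (hlim : Order.IsSuccLimit o) (hcof : ℵ₀ < o.cof)
    {C D : Set Ordinal} (hC : ClubIn o C) (hD : ClubIn o D) : ClubIn o (C ∩ D) := by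
  have h := clubIn_iInter hlim hcof (fun n => if n = 0 then C else D)
    (fun n => by split <;> assumption)
  have he : (⋂ n, if n = 0 then C else D) = C ∩ D := by
    ext x
    simp only [Set.mem_iInter, Set.mem_inter_iff]
    constructor
    · intro hx; exact ⟨by simpa using hx 0, by simpa using hx 1⟩
    · rintro ⟨h1, h2⟩ n; split <;> assumption
  rwa [he] at h

lemma clubIn_Ioo {o : Ordinal} (hlim : Order.IsSuccLimit o) {b : Ordinal} (hb : b < o) :
    ClubIn o (Set.Ioo b o) := by
  refine ⟨fun x hx => hx.2, ?_, ?_⟩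
  · intro α hα
    refine ⟨Order.succ (max α b), ⟨?_, hlim.succ_lt (max_lt hα hb)⟩, ?_⟩
    · exact lt_of_le_of_lt (le_max_right α b) (Order.lt_succ _)
    · exact lt_of_le_of_lt (le_max_left α b) (Order.lt_succ _)
  · intro α hα h0 hlimpt
    obtain ⟨γ, hγ, _, h2⟩ := hlimpt 0 h0
    exact ⟨lt_trans hγ.1 h2, hα⟩

lemma stationary_inter_Ioo {o : Ordinal} (hlim : Order.IsSuccLimit o) (hcof : ℵ₀ < o.cof)
    {D : Set Ordinal} (hD : StationaryIn o D) {b : Ordinal} (hb : b < o) :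
    StationaryIn o (D ∩ Set.Ioo b o) := by
  refine ⟨fun x hx => hx.2.2, fun C hC => ?_⟩
  obtain ⟨x, hxD, hxI⟩ := hD.2 (C ∩ Set.Ioo b o) (clubIn_inter hlim hcof hC (clubIn_Ioo hlim hb))
  exact ⟨x, ⟨hxD, hxI.2⟩, hxI.1⟩

/-- If κ is a regular uncountable cardinal and E(κ) holds, then C*(κ) holds. -/
theorem statement_2 (κ : Cardinal) (hreg : κ.IsRegular) (hunc : ℵ₀ < κ)
    (hE : PrincipleE κ) : PrincipleCstar κ := by
  intro T A
  have hlim : Order.IsSuccLimit κ.ord := Cardinal.isSuccLimit_ord hreg.1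
  have hcof : ℵ₀ < κ.ord.cof := by rw [hreg.cof_eq]; exact hunc
  by_cases hC2 : ∃ t ∈ T, ∃ D : Fin t.length → Set Ordinal,
      (∀ i, StationaryIn κ.ord (D i)) ∧
      ∀ s : Fin t.length → Ordinal, Function.Injective s →
        (∀ i, s i ∈ D i) → (MatInt A t s).Infinite
  · exact Or.inr hC2
  push_neg at hC2
  rcases hE T A with ⟨S, hS, hcnt⟩ | ⟨t, ht, D, hD, hdist⟩
  · -- E case 1
    left
    have hY : ∀ p : List ℕ × Set ℕ, ∃ C, ClubIn κ.ord C ∧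
        (p.1 ∈ T ∧ p.2.Infinite → ∃ i : Fin p.1.length,
          ∀ α ∈ C, ¬(α ∈ S ∧ p.2 ⊆ A α (p.1.get i))) := by
      intro p
      by_cases hp : p.1 ∈ T ∧ p.2.Infinite
      · by_cases hstat : ∀ i : Fin p.1.length,
            StationaryIn κ.ord {α | α ∈ S ∧ p.2 ⊆ A α (p.1.get i)}
        · exfalso
          obtain ⟨s, hinj, hmem, hninf⟩ := hC2 p.1 hp.1 _ hstat
          have hsub : p.2 ⊆ MatInt A p.1 s := Set.subset_iInter fun i => (hmem i).2
          exact hp.2 (hninf.subset hsub)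
        · obtain ⟨i, hi⟩ := not_forall.mp hstat
          have hsub : {α | α ∈ S ∧ p.2 ⊆ A α (p.1.get i)} ⊆ Set.Iio κ.ord :=
            fun α hα => hS.1 hα.1
          have h2 : ¬ ∀ C, ClubIn κ.ord C →
              ({α | α ∈ S ∧ p.2 ⊆ A α (p.1.get i)} ∩ C).Nonempty := by
            intro h; exact hi ⟨hsub, h⟩
          push_neg at h2
          obtain ⟨C, hC, hCe⟩ := h2
          refine ⟨C, hC, fun _ => ⟨i, fun α hα hmem => ?_⟩⟩
          have hx : α ∈ ({α | α ∈ S ∧ p.2 ⊆ A α (p.1.get i)} ∩ C) := ⟨hmem, hα⟩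
          rw [hCe] at hx
          exact hx
      · exact ⟨Set.Iio κ.ord, clubIn_Iio hlim, fun h => absurd h hp⟩
    choose Cl hCl1 hCl2 using hY
    set 𝒞 : Set (Set ℕ) := {X : Set ℕ | ∃ t ∈ T, ∃ s : Fin (List.length t) → Ordinal,
        Function.Injective s ∧ (∀ i, s i ∈ S) ∧ X = MatInt A t s} with h𝒞
    set P : Set (List ℕ × Set ℕ) := {p | p.1 ∈ T ∧ p.2 ∈ 𝒞 ∧ p.2.Infinite} with hP
    have hPc : P.Countable := by
      refine Set.Countable.mono (fun p hp => ?_) ((Set.to_countable T).prod hcnt)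
      exact ⟨hp.1, hp.2.1⟩
    by_cases hPe : P.Nonempty
    · obtain ⟨e, he⟩ := Set.Countable.exists_eq_range hPc hPe
      refine ⟨S ∩ ⋂ n, Cl (e n), ⟨fun x hx => hS.1 hx.1, ?_⟩, ?_⟩
      · intro C hC
        set g : ℕ → Set Ordinal := fun n => Nat.rec C (fun m _ => Cl (e m)) n with hg
        have hgclub : ∀ n, ClubIn κ.ord (g n) := by
          intro n; cases n with
          | zero => exact hC
          | succ m => exact hCl1 (e m)
        obtain ⟨x, hxS, hxg⟩ := hS.2 (⋂ n, g n) (clubIn_iInter hlim hcof g hgclub)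
        refine ⟨x, ⟨hxS, Set.mem_iInter.mpr fun n => ?_⟩, Set.mem_iInter.mp hxg 0⟩
        exact Set.mem_iInter.mp hxg (n + 1)
      · intro t ht s hinj hmem
        by_contra hfin
        have hinf : (MatInt A t s).Infinite := hfin
        have hmemS : ∀ i, s i ∈ S := fun i => (hmem i).1
        have hpP : (t, MatInt A t s) ∈ P :=
          ⟨ht, ⟨t, ht, s, hinj, hmemS, rfl⟩, hinf⟩
        obtain ⟨n, hn⟩ := by rw [he] at hpP; exact hpP
        obtain ⟨i, hi⟩ := hCl2 (t, MatInt A t s) ⟨ht, hinf⟩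
        refine hi (s i) ?_ ⟨hmemS i, Set.iInter_subset _ i⟩
        have := Set.mem_iInter.mp (hmem i).2 n
        rwa [hn] at this
    · refine ⟨S, hS, fun t ht s hinj hmem => ?_⟩
      by_contra hfin
      exact hPe ⟨(t, MatInt A t s), ht, ⟨t, ht, s, hinj, hmem, rfl⟩, hfin⟩
  · -- E case 2 : derive a contradiction
    exfalso
    have key : ∀ b < κ.ord, ∃ s : Fin t.length → Ordinal, Function.Injective s ∧
        (∀ i, s i ∈ D i) ∧ (∀ i, b < s i) ∧ (MatInt A t s).Finite := by
      intro b hb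
      obtain ⟨s, hinj, hmem, hninf⟩ := hC2 t ht (fun i => D i ∩ Set.Ioo b κ.ord)
        (fun i => stationary_inter_Ioo hlim hcof (hD i) hb)
      exact ⟨s, hinj, fun i => (hmem i).1, fun i => (hmem i).2.1, hninf⟩
    have hBad : ¬ ∀ G : Finset ℕ, ∃ b, b < κ.ord ∧ ∀ s : Fin t.length → Ordinal,
        Function.Injective s → (∀ i, s i ∈ D i) → (∀ i, b < s i) →
          MatInt A t s ≠ ↑G := by
      intro bad
      set bnd : ℕ → Ordinal := fun n =>
        (Encodable.decode (α := Finset ℕ) n).elim 0 (fun G => (bad G).choose) with hbnd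
      have hbndo : ∀ n, bnd n < κ.ord := by
        intro n
        rcases h : Encodable.decode (α := Finset ℕ) n with _ | G
        · simp [hbnd, h, hlim.pos]
        · simp only [hbnd, h, Option.elim]
          exact (bad G).choose_spec.1
      have hσ : (⨆ n, bnd n) < κ.ord := by
        apply Ordinal.iSup_lt_ord_lift _ hbndo
        simpa using hcof
      obtain ⟨s, hinj, hmem, hgt, hfin⟩ := key _ hσ
      have hbe : bnd (Encodable.encode hfin.toFinset) = (bad hfin.toFinset).choose := by
        simp [hbnd, Encodable.encodek]
      refine (bad hfin.toFinset).choose_spec.2 s hinj hmem (fun i => ?_) ?_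
      · calc (bad hfin.toFinset).choose = bnd _ := hbe.symm
          _ ≤ ⨆ n, bnd n := Ordinal.le_iSup bnd _
          _ < s i := hgt i
      · exact (Set.Finite.coe_toFinset hfin).symm
    push_neg at hBad
    obtain ⟨G, hG⟩ := hBad
    obtain ⟨s₁, hinj₁, hmem₁, _, heq₁⟩ := hG 0 hlim.pos
    have hM : (Finset.univ.sup s₁) < κ.ord := by
      refine Finset.sup_lt_iff hlim.pos |>.mpr fun i _ => ?_
      exact (hD i).1 (hmem₁ i)
    obtain ⟨s₂, hinj₂, hmem₂, hgt₂, heq₂⟩ := hG _ hM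
    refine hdist s₁ s₂ hinj₁ hinj₂ hmem₁ hmem₂ (fun i => ?_) ?_
    · exact ne_of_lt (lt_of_le_of_lt (Finset.le_sup (Finset.mem_univ i)) (hgt₂ i))
    · rw [heq₁, heq₂]
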